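/- Let f be increasing, differentiable, and nonnegative on [0,1] with f(b) finite and f(a) ≥ 0 (and f vanishing at or below a in the sense f⁻¹(0) ≤ a). Then for the (Lebesgue)² q-measure μ(A) = ν(A)², ∫_a^b f dμ = ∫_0^b f dμ - ∫_0^a f dμ - 2(b-a)·∫_0^a f(t) dt. -/

import Mathlib

open MeasureTheory Set

/-- The (Lebesgue)² quantum measure: the square of Lebesgue measure. -/
noncomputable def lebSq (A : Set ℝ) : ℝ := (volume A).toReal ^ 2

/-- Quantum integral of a nonnegative function over `(a, b)` for the (Lebesgue)² q-measure. -/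
noncomputable def qInt (a b : ℝ) (f : ℝ → ℝ) : ℝ :=
  ∫ lam in Set.Ioi (0 : ℝ), lebSq (Set.Ioo a b ∩ {x | f x > lam})

lemma integrable_aux {g : ℝ → ℝ} (hg : Antitone g) (h0 : ∀ x, 0 ≤ g x) (h1 : ∀ x, g x ≤ 1)
    {B : ℝ} (hB : ∀ lam, B ≤ lam → g lam = 0) :
    MeasureTheory.IntegrableOn g (Set.Ioi (0:ℝ)) := by
  have hind : Integrable ((Set.Ioc (0:ℝ) B).indicator (fun _ => (1:ℝ))) := by
    rw [integrable_indicator_iff measurableSet_Ioc]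
    exact integrableOn_const measure_Ioc_lt_top.ne
  apply Integrable.mono' (hind.integrableOn) (hg.measurable.aestronglyMeasurable)
  refine (ae_restrict_iff' measurableSet_Ioi).2 (Filter.Eventually.of_forall fun lam hlam => ?_)
  by_cases h : lam ≤ B
  · rw [Set.indicator_of_mem (Set.mem_Ioc.2 ⟨hlam, h⟩), Real.norm_eq_abs,
      abs_of_nonneg (h0 lam)]
    exact h1 lam
  · rw [hB lam (le_of_lt (not_le.1 h)), Set.indicator_of_notMem (fun hm => h hm.2)]
    simp

theorem stmt_11 (f : ℝ → ℝ) (a b : ℝ) (ha : 0 ≤ a) (hab : a < b) (hb : b ≤ 1)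
    (hmono : MonotoneOn f (Set.Icc 0 1))
    (hdiff : DifferentiableOn ℝ f (Set.Icc 0 1))
    (hpos : ∀ x ∈ Set.Icc (0 : ℝ) 1, 0 ≤ f x)
    (hzero : ∀ x ∈ Set.Icc (0 : ℝ) 1, f x = 0 → x ≤ a) :
    qInt a b f = qInt 0 b f - qInt 0 a f - 2 * (b - a) * ∫ t in (0 : ℝ)..a, f t := by
  have hb0 : (0:ℝ) ≤ b := le_trans ha hab.le
  set S : ℝ → Set ℝ := fun lam => {x | f x > lam} with hS
  -- the three measure functions
  set g : ℝ → ℝ → ℝ → ℝ := fun c d lam => (volume (Set.Ioo c d ∩ S lam)).toReal with hg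
  -- basic facts
  have hfin : ∀ c d lam, volume (Set.Ioo c d ∩ S lam) ≠ ⊤ :=
    fun c d lam => (lt_of_le_of_lt (measure_mono Set.inter_subset_left) measure_Ioo_lt_top).ne
  have hanti : ∀ c d, Antitone (g c d) := by
    intro c d x y hxy
    exact ENNReal.toReal_mono (hfin c d x)
      (measure_mono (Set.inter_subset_inter_right _ (fun z hz => lt_of_le_of_lt hxy hz)))
  have h0 : ∀ c d lam, 0 ≤ g c d lam := fun c d lam => ENNReal.toReal_nonneg
  have h1 : ∀ c d lam, 0 ≤ c → d ≤ 1 → g c d lam ≤ 1 := by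
    intro c d lam hc hd
    have : volume (Set.Ioo c d ∩ S lam) ≤ volume (Set.Icc (0:ℝ) 1) := by
      refine measure_mono (fun z hz => ?_)
      exact ⟨le_of_lt (lt_of_le_of_lt hc hz.1.1), le_trans hz.1.2.le hd⟩
    have := ENNReal.toReal_mono (by simp [Real.volume_Icc]) this
    simpa [Real.volume_Icc] using this
  have hvanish : ∀ c d, 0 ≤ c → d ≤ b → ∀ lam, f b ≤ lam → g c d lam = 0 := by
    intro c d hc hd lam hlam
    have : Set.Ioo c d ∩ S lam = ∅ := by
      ext x
      simp only [Set.mem_inter_iff, Set.mem_Ioo, Set.mem_empty_iff_false, iff_false, hS,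
        Set.mem_setOf_eq, not_and]
      rintro ⟨hx1, hx2⟩
      have hxI : x ∈ Set.Icc (0:ℝ) 1 := ⟨le_of_lt (lt_of_le_of_lt hc hx1),
        le_trans (le_of_lt (lt_of_lt_of_le hx2 hd)) hb⟩
      have : f x ≤ f b := hmono hxI ⟨hb0, hb⟩ (le_of_lt (lt_of_lt_of_le hx2 hd))
      exact not_lt.2 (le_trans this hlam)
    simp [hg, this]
  -- pointwise identity
  have key : ∀ lam ∈ Set.Ioi (0:ℝ),
      g a b lam ^ 2 = g 0 b lam ^ 2 - g 0 a lam ^ 2 - 2 * (b - a) * g 0 a lam := by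
    intro lam _
    by_cases h : volume (Set.Ioo 0 a ∩ S lam) = 0
    · have h3 : g 0 a lam = 0 := by simp [hg, h]
      have heq : volume (Set.Ioo 0 b ∩ S lam) = volume (Set.Ioo a b ∩ S lam) := by
        apply le_antisymm
        · have hsub : Set.Ioo 0 b ∩ S lam ⊆
              (Set.Ioo 0 a ∩ S lam) ∪ ({a} ∪ (Set.Ioo a b ∩ S lam)) := by
            rintro z ⟨⟨hz1, hz2⟩, hzS⟩
            rcases lt_trichotomy z a with h' | h' | h'
            · exact Or.inl ⟨⟨hz1, h'⟩, hzS⟩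
            · exact Or.inr (Or.inl h')
            · exact Or.inr (Or.inr ⟨⟨h', hz2⟩, hzS⟩)
          calc volume (Set.Ioo 0 b ∩ S lam)
              ≤ volume (Set.Ioo 0 a ∩ S lam) + volume ({a} ∪ (Set.Ioo a b ∩ S lam)) :=
                le_trans (measure_mono hsub) (measure_union_le _ _)
            _ ≤ 0 + (volume ({a} : Set ℝ) + volume (Set.Ioo a b ∩ S lam)) := by
                rw [h]; exact add_le_add le_rfl (measure_union_le _ _)
            _ = volume (Set.Ioo a b ∩ S lam) := by simp
        · exact measure_mono (Set.inter_subset_inter_left _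
            (Set.Ioo_subset_Ioo ha le_rfl))
      have h2 : g 0 b lam = g a b lam := by simp [hg, heq]
      rw [h2, h3]; ring
    · obtain ⟨x, hx⟩ := nonempty_of_measure_ne_zero h
      obtain ⟨⟨hx0, hxa⟩, hxS⟩ := hx
      have hxI : x ∈ Set.Icc (0:ℝ) 1 := ⟨hx0.le, le_trans (le_of_lt (lt_trans hxa hab)) hb⟩
      have hIco : Set.Ico a b ⊆ S lam := by
        rintro y ⟨hy1, hy2⟩
        have hyI : y ∈ Set.Icc (0:ℝ) 1 := ⟨le_trans ha hy1, le_trans hy2.le hb⟩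
        exact lt_of_lt_of_le hxS (hmono hxI hyI (le_trans hxa.le hy1))
      have hunion : Set.Ioo 0 b ∩ S lam = (Set.Ioo 0 a ∩ S lam) ∪ Set.Ico a b := by
        ext z
        constructor
        · rintro ⟨⟨hz1, hz2⟩, hzS⟩
          rcases lt_or_ge z a with h' | h'
          · exact Or.inl ⟨⟨hz1, h'⟩, hzS⟩
          · exact Or.inr ⟨h', hz2⟩
        · rintro (⟨⟨hz1, hz2⟩, hzS⟩ | ⟨hz1, hz2⟩)
          · exact ⟨⟨hz1, lt_trans hz2 hab⟩, hzS⟩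
          · exact ⟨⟨lt_of_lt_of_le (lt_trans hx0 hxa) hz1, hz2⟩, hIco ⟨hz1, hz2⟩⟩
      have hdisj : Disjoint (Set.Ioo 0 a ∩ S lam) (Set.Ico a b) := by
        rw [Set.disjoint_left]
        rintro z ⟨⟨_, hz2⟩, _⟩ ⟨hz3, _⟩
        exact absurd hz3 (not_le.2 hz2)
      have hmeas : volume (Set.Ioo 0 b ∩ S lam)
          = volume (Set.Ioo 0 a ∩ S lam) + volume (Set.Ico a b) := by
        rw [hunion, measure_union hdisj measurableSet_Ico]
      have hIab : Set.Ioo a b ∩ S lam = Set.Ioo a b :=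
        Set.inter_eq_left.2 (fun z hz => hIco ⟨hz.1.le, hz.2⟩)
      have h1' : g a b lam = b - a := by
        simp [hg, hIab, Real.volume_Ioo, ENNReal.toReal_ofReal (by linarith : (0:ℝ) ≤ b - a)]
      have h2' : g 0 b lam = g 0 a lam + (b - a) := by
        simp only [hg]
        rw [hmeas, ENNReal.toReal_add (hfin 0 a lam) (by simp [Real.volume_Ico]),
          Real.volume_Ico, ENNReal.toReal_ofReal (by linarith : (0:ℝ) ≤ b - a)]
      rw [h1', h2']; ring
  -- integrabilities
  have Iab : IntegrableOn (fun lam => g a b lam ^ 2) (Set.Ioi (0:ℝ)) := by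
    apply integrable_aux (fun x y hxy => pow_le_pow_left₀ (h0 a b y) (hanti a b hxy) 2)
      (fun x => sq_nonneg _) (fun x => by
        have := h1 a b x ha hb
        nlinarith [h0 a b x])
      (B := f b) (fun lam hlam => by rw [hvanish a b ha le_rfl lam hlam]; ring)
  have I0b : IntegrableOn (fun lam => g 0 b lam ^ 2) (Set.Ioi (0:ℝ)) := by
    apply integrable_aux (fun x y hxy => pow_le_pow_left₀ (h0 0 b y) (hanti 0 b hxy) 2)
      (fun x => sq_nonneg _) (fun x => by
        have := h1 0 b x le_rfl hb
        nlinarith [h0 0 b x])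
      (B := f b) (fun lam hlam => by rw [hvanish 0 b le_rfl le_rfl lam hlam]; ring)
  have I0a : IntegrableOn (fun lam => g 0 a lam ^ 2) (Set.Ioi (0:ℝ)) := by
    apply integrable_aux (fun x y hxy => pow_le_pow_left₀ (h0 0 a y) (hanti 0 a hxy) 2)
      (fun x => sq_nonneg _) (fun x => by
        have := h1 0 a x le_rfl (le_trans hab.le hb)
        nlinarith [h0 0 a x])
      (B := f b) (fun lam hlam => by rw [hvanish 0 a le_rfl hab.le lam hlam]; ring)
  have I0a1 : IntegrableOn (fun lam => g 0 a lam) (Set.Ioi (0:ℝ)) :=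
    integrable_aux (hanti 0 a) (h0 0 a) (fun x => h1 0 a x le_rfl (le_trans hab.le hb))
      (B := f b) (hvanish 0 a le_rfl hab.le)
  -- layer cake for the last term
  have hlayer : ∫ t in (0:ℝ)..a, f t = ∫ lam in Set.Ioi (0:ℝ), g 0 a lam := by
    have hInt : IntegrableOn f (Set.Ioo 0 a) :=
      (hdiff.continuousOn.integrableOn_Icc).mono_set
        (fun z hz => ⟨hz.1.le, le_trans hz.2.le (le_trans hab.le hb)⟩)
    have hnn : 0 ≤ᵐ[volume.restrict (Set.Ioo 0 a)] f :=
      (ae_restrict_iff' measurableSet_Ioo).2 (Filter.Eventually.of_forall fun x hx =>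
        hpos x ⟨hx.1.le, le_trans hx.2.le (le_trans hab.le hb)⟩)
    have hlc := hInt.integral_eq_integral_meas_lt hnn
    rw [intervalIntegral.integral_of_le ha, integral_Ioc_eq_integral_Ioo, hlc]
    refine setIntegral_congr_fun measurableSet_Ioi (fun lam _ => ?_)
    simp only [hg]
    rw [measureReal_def, Measure.restrict_apply' measurableSet_Ioo, Set.inter_comm]
  -- assemble
  have hsplit : qInt a b f = (∫ lam in Set.Ioi (0:ℝ), g 0 b lam ^ 2)
      - (∫ lam in Set.Ioi (0:ℝ), g 0 a lam ^ 2)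
      - 2 * (b - a) * (∫ lam in Set.Ioi (0:ℝ), g 0 a lam) := by
    have h₁ : qInt a b f = ∫ lam in Set.Ioi (0:ℝ),
        (g 0 b lam ^ 2 - g 0 a lam ^ 2 - 2 * (b - a) * g 0 a lam) := by
      have : qInt a b f = ∫ lam in Set.Ioi (0:ℝ), g a b lam ^ 2 := rfl
      rw [this]
      exact setIntegral_congr_fun measurableSet_Ioi key
    have hs1 : ∫ lam in Set.Ioi (0:ℝ),
        (g 0 b lam ^ 2 - g 0 a lam ^ 2 - 2 * (b - a) * g 0 a lam)
        = (∫ lam in Set.Ioi (0:ℝ), (g 0 b lam ^ 2 - g 0 a lam ^ 2))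
          - ∫ lam in Set.Ioi (0:ℝ), 2 * (b - a) * g 0 a lam :=
      integral_sub (I0b.sub I0a) (I0a1.const_mul _)
    have hs2 : ∫ lam in Set.Ioi (0:ℝ), (g 0 b lam ^ 2 - g 0 a lam ^ 2)
        = (∫ lam in Set.Ioi (0:ℝ), g 0 b lam ^ 2) - ∫ lam in Set.Ioi (0:ℝ), g 0 a lam ^ 2 :=
      integral_sub I0b I0a
    have hs3 : ∫ lam in Set.Ioi (0:ℝ), 2 * (b - a) * g 0 a lam
        = 2 * (b - a) * ∫ lam in Set.Ioi (0:ℝ), g 0 a lam := MeasureTheory.integral_const_mul _ _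
    rw [h₁, hs1, hs2, hs3]
  have e1 : qInt 0 b f = ∫ lam in Set.Ioi (0:ℝ), g 0 b lam ^ 2 := rfl
  have e2 : qInt 0 a f = ∫ lam in Set.Ioi (0:ℝ), g 0 a lam ^ 2 := rfl
  rw [hsplit, e1, e2, hlayer]
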